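/- The spider Sp(1^[5], 2^[1]) (five legs of length 1 and one leg of length 2) admits no local antimagic total labeling with exactly 2 distinct vertex weights; hence χ_lat(Sp(1^[5], 2)) = 3. -/

import Mathlib

open Finset

variable {V : Type*} [Fintype V] [DecidableEq V]

/-- The weight of a vertex `u` under the total labeling given by vertex labels `fv`
and edge labels `fe` : `w(u) = f(u) + \sum_{e incident to u} f(e)`. -/
def latWeight (G : SimpleGraph V) [DecidableRel G.Adj]
    (fv : V → ℕ) (fe : Sym2 V → ℕ) (u : V) : ℕ :=
  fv u + ∑ v ∈ G.neighborFinset u, fe s(u, v)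

/-- `fv, fe` together form a bijection from `V(G) ∪ E(G)` onto `{1, …, p + q}`,
where `p` is the order and `q` is the size of `G`. -/
def IsTotalLabeling (G : SimpleGraph V) [DecidableRel G.Adj]
    (fv : V → ℕ) (fe : Sym2 V → ℕ) : Prop :=
  Set.BijOn (Sum.elim fv (fun e : G.edgeSet => fe (e : Sym2 V))) Set.univ
    (Set.Icc 1 (Fintype.card V + G.edgeFinset.card))

/-- A local antimagic total labeling of `G` : a bijective total labeling such that any two
adjacent vertices get distinct weights. -/
def IsLocalAntimagicTotal (G : SimpleGraph V) [DecidableRel G.Adj]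
    (fv : V → ℕ) (fe : Sym2 V → ℕ) : Prop :=
  IsTotalLabeling G fv fe ∧
    ∀ ⦃u v : V⦄, G.Adj u v → latWeight G fv fe u ≠ latWeight G fv fe v

/-- The local antimagic total chromatic number `χ_lat(G)` : the minimum number of distinct
vertex weights taken over all local antimagic total labelings of `G`. -/
noncomputable def chiLat (G : SimpleGraph V) [DecidableRel G.Adj] : ℕ :=
  sInf {c | ∃ fv fe, IsLocalAntimagicTotal G fv fe ∧
    (Finset.univ.image (latWeight G fv fe)).card = c}

instance {W : Type*} (r : W → W → Prop) [DecidableEq W] [DecidableRel r] :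
    DecidableRel (SimpleGraph.fromRel r).Adj :=
  fun a b => decidable_of_iff _ (SimpleGraph.fromRel_adj r a b).symm

/-- Adjacency for the spider `Sp(1^[m], 2^[n])` : the center `x = none` is adjacent to each
leaf `y i = some (Sum.inl i)` and to each `u j = some (Sum.inr (j, false))`, and each `u j`
is adjacent to the leaf `v j = some (Sum.inr (j, true))`. -/
def spider12R (m n : ℕ) :
    Option (Fin m ⊕ Fin n × Bool) → Option (Fin m ⊕ Fin n × Bool) → Bool
  | none, some (Sum.inl _) => true
  | none, some (Sum.inr (_, false)) => true
  | some (Sum.inr (j, false)), some (Sum.inr (j', true)) => decide (j = j')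
  | _, _ => false

/-- The spider `Sp(1^[m], 2^[n])` with `m` legs of length `1` and `n` legs of length `2`. -/
abbrev spider12 (m n : ℕ) : SimpleGraph (Option (Fin m ⊕ Fin n × Bool)) :=
  SimpleGraph.fromRel (fun a b => spider12R m n a b = true)

namespace SpiderAux

theorem sum5_ge (m e1 e2 e3 e4 e5 : ℕ) (dE01 : e1 ≠ e2) (dE02 : e1 ≠ e3) (dE03 : e1 ≠ e4) (dE04 : e1 ≠ e5) (dE12 : e2 ≠ e3) (dE13 : e2 ≠ e4) (dE14 : e2 ≠ e5) (dE23 : e3 ≠ e4) (dE24 : e3 ≠ e5) (dE34 : e4 ≠ e5)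
    (h1 : m ≤ e1) (h2 : m ≤ e2) (h3 : m ≤ e3) (h4 : m ≤ e4) (h5 : m ≤ e5) :
    5*m + 10 ≤ e1+e2+e3+e4+e5 := by omega

theorem sum5B (e1 e2 e3 e4 e5 : ℕ) (dE01 : e1 ≠ e2) (dE02 : e1 ≠ e3) (dE03 : e1 ≠ e4) (dE04 : e1 ≠ e5) (dE12 : e2 ≠ e3) (dE13 : e2 ≠ e4) (dE14 : e2 ≠ e5) (dE23 : e3 ≠ e4) (dE24 : e3 ≠ e5) (dE34 : e4 ≠ e5)
    (h1 : 2 ≤ e1) (h2 : 2 ≤ e2) (h3 : 2 ≤ e3) (h4 : 2 ≤ e4) (h5 : 2 ≤ e5)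
    (n1 : e1 ≠ 3) (n2 : e2 ≠ 3) (n3 : e3 ≠ 3) (n4 : e4 ≠ 3) (n5 : e5 ≠ 3)
    (m1 : e1 ≠ 4) (m2 : e2 ≠ 4) (m3 : e3 ≠ 4) (m4 : e4 ≠ 4) (m5 : e5 ≠ 4) :
    28 ≤ e1+e2+e3+e4+e5 := by omega

-- mini lemmas
theorem lge (g e b c : ℕ) (h : g + e = b) (bg : g ≤ 15) (hb : b = c + 15) : c ≤ e := by omega
theorem m16x (fx fuv : ℕ) (h : 16 - fuv = fx) (h9 : 9 ≤ fx) (b1 : 1 ≤ fuv) : fuv ≤ 8 := by omega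
theorem m16u (fu2 fxu fuv b : ℕ) (h6 : fu2 + (fxu + fuv) = b) (hb : b = 16)
    (h : 16 - fuv = fu2) (bxu : 1 ≤ fxu) (b15 : fuv ≤ 15) : fuv ≤ 8 := by omega
theorem m16xu (fu2 fxu fuv b : ℕ) (h6 : fu2 + (fxu + fuv) = b) (hb : b = 16)
    (h : 16 - fuv = fxu) (bu : 1 ≤ fu2) (b15 : fuv ≤ 15) : fuv ≤ 8 := by omega
theorem m16self (fuv : ℕ) (h : 16 - fuv = fuv) : fuv ≤ 8 := by omega
theorem m16e (g e fuv b : ℕ) (hg : g + e = b) (hb : b = 16) (hne : g ≠ fuv)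
    (h : 16 - fuv = e) (b1 : 1 ≤ fuv) (b15 : fuv ≤ 15) : fuv ≤ 8 := by omega
theorem m16g (g e fuv b : ℕ) (hg : g + e = b) (hb : b = 16) (hne : e ≠ fuv)
    (h : 16 - fuv = g) (b1 : 1 ≤ fuv) (b15 : fuv ≤ 15) : fuv ≤ 8 := by omega

theorem case16fuv (fx fv2 fu2 fxu fuv e1 e2 e3 e4 e5 g1 g2 g3 g4 g5 b : ℕ)
    (dEuv1 : e1 ≠ fuv) (dEuv2 : e2 ≠ fuv) (dEuv3 : e3 ≠ fuv) (dEuv4 : e4 ≠ fuv) (dEuv5 : e5 ≠ fuv)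
    (dGuv1 : g1 ≠ fuv) (dGuv2 : g2 ≠ fuv) (dGuv3 : g3 ≠ fuv) (dGuv4 : g4 ≠ fuv) (dGuv5 : g5 ≠ fuv)
    (h1 : g1 + e1 = b) (h2 : g2 + e2 = b) (h3 : g3 + e3 = b) (h4 : g4 + e4 = b) (h5 : g5 + e5 = b)
    (h6 : fu2 + (fxu + fuv) = b)
    (buv1 : 1 ≤ fuv) (buv : fuv ≤ 15) (bu : 1 ≤ fu2) (bxu : 1 ≤ fxu)
    (hbx9 : 9 ≤ fx) (hbv9 : 9 ≤ fv2) (hbeq : b = 16)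
    (hz : (16 - fuv) = fx ∨ (16 - fuv) = fv2 ∨ (16 - fuv) = fu2 ∨ (16 - fuv) = fxu ∨ (16 - fuv) = fuv ∨ (16 - fuv) = e1 ∨ (16 - fuv) = e2 ∨ (16 - fuv) = e3 ∨ (16 - fuv) = e4 ∨ (16 - fuv) = e5 ∨ (16 - fuv) = g1 ∨ (16 - fuv) = g2 ∨ (16 - fuv) = g3 ∨ (16 - fuv) = g4 ∨ (16 - fuv) = g5) : fuv ≤ 8 := by
  rcases hz with h|h|h|h|h|h|h|h|h|h|h|h|h|h|h
  exacts [m16x fx fuv h hbx9 buv1, m16x fv2 fuv h hbv9 buv1,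
    m16u fu2 fxu fuv b h6 hbeq h bxu buv, m16xu fu2 fxu fuv b h6 hbeq h bu buv, m16self fuv h,
    m16e g1 e1 fuv b h1 hbeq dGuv1 h buv1 buv, m16e g2 e2 fuv b h2 hbeq dGuv2 h buv1 buv,
    m16e g3 e3 fuv b h3 hbeq dGuv3 h buv1 buv, m16e g4 e4 fuv b h4 hbeq dGuv4 h buv1 buv,
    m16e g5 e5 fuv b h5 hbeq dGuv5 h buv1 buv,
    m16g g1 e1 fuv b h1 hbeq dEuv1 h buv1 buv, m16g g2 e2 fuv b h2 hbeq dEuv2 h buv1 buv,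
    m16g g3 e3 fuv b h3 hbeq dEuv3 h buv1 buv, m16g g4 e4 fuv b h4 hbeq dEuv4 h buv1 buv,
    m16g g5 e5 fuv b h5 hbeq dEuv5 h buv1 buv]

theorem caseB16 (fx fv2 fxu fuv e1 e2 e3 e4 e5 a : ℕ) (dE01 : e1 ≠ e2) (dE02 : e1 ≠ e3) (dE03 : e1 ≠ e4) (dE04 : e1 ≠ e5) (dE12 : e2 ≠ e3) (dE13 : e2 ≠ e4) (dE14 : e2 ≠ e5) (dE23 : e3 ≠ e4) (dE24 : e3 ≠ e5) (dE34 : e4 ≠ e5)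
    (h7 : fv2 + fuv = a) (h8 : fx + (e1+e2+e3+e4+e5+fxu) = a)
    (be1 : 1 ≤ e1) (be2 : 1 ≤ e2) (be3 : 1 ≤ e3) (be4 : 1 ≤ e4) (be5 : 1 ≤ e5)
    (bxu : 1 ≤ fxu) (bv : fv2 ≤ 15)
    (hbx : fx + fv2 = 24) (hfuv : fuv ≤ 8) : False := by
  have h15 := sum5_ge 1 e1 e2 e3 e4 e5 dE01 dE02 dE03 dE04 dE12 dE13 dE14 dE23 dE24 dE34 be1 be2 be3 be4 be5
  omega

theorem caseB19 (fx fv2 fxu fuv e1 e2 e3 e4 e5 g1 g2 g3 g4 g5 a b : ℕ) (dE01 : e1 ≠ e2) (dE02 : e1 ≠ e3) (dE03 : e1 ≠ e4) (dE04 : e1 ≠ e5) (dE12 : e2 ≠ e3) (dE13 : e2 ≠ e4) (dE14 : e2 ≠ e5) (dE23 : e3 ≠ e4) (dE24 : e3 ≠ e5) (dE34 : e4 ≠ e5)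
    (h1 : g1 + e1 = b) (h2 : g2 + e2 = b) (h3 : g3 + e3 = b) (h4 : g4 + e4 = b) (h5 : g5 + e5 = b)
    (h7 : fv2 + fuv = a) (h8 : fx + (e1+e2+e3+e4+e5+fxu) = a)
    (bx : 1 ≤ fx) (bxu : 1 ≤ fxu) (bv : fv2 ≤ 15) (buv : fuv ≤ 15)
    (bg1 : g1 ≤ 15) (bg2 : g2 ≤ 15) (bg3 : g3 ≤ 15) (bg4 : g4 ≤ 15) (bg5 : g5 ≤ 15)
    (hbx : fx + fv2 = 6) (hbeq : b = 19) : False := by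
  have h30 := sum5_ge 4 e1 e2 e3 e4 e5 dE01 dE02 dE03 dE04 dE12 dE13 dE14 dE23 dE24 dE34 (lge g1 e1 b 4 h1 bg1 hbeq)
    (lge g2 e2 b 4 h2 bg2 hbeq) (lge g3 e3 b 4 h3 bg3 hbeq) (lge g4 e4 b 4 h4 bg4 hbeq)
    (lge g5 e5 b 4 h5 bg5 hbeq)
  clear dE01 dE02 dE03 dE04 dE12 dE13 dE14 dE23 dE24 dE34
  omega

theorem caseB18 (fx fv2 fxu fuv e1 e2 e3 e4 e5 g1 g2 g3 g4 g5 a b : ℕ) (dE01 : e1 ≠ e2) (dE02 : e1 ≠ e3) (dE03 : e1 ≠ e4) (dE04 : e1 ≠ e5) (dE12 : e2 ≠ e3) (dE13 : e2 ≠ e4) (dE14 : e2 ≠ e5) (dE23 : e3 ≠ e4) (dE24 : e3 ≠ e5) (dE34 : e4 ≠ e5)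
    (h1 : g1 + e1 = b) (h2 : g2 + e2 = b) (h3 : g3 + e3 = b) (h4 : g4 + e4 = b) (h5 : g5 + e5 = b)
    (h7 : fv2 + fuv = a) (h8 : fx + (e1+e2+e3+e4+e5+fxu) = a)
    (bx : 1 ≤ fx) (bxu : 1 ≤ fxu) (bv : fv2 ≤ 15) (buv : fuv ≤ 15)
    (bg1 : g1 ≤ 15) (bg2 : g2 ≤ 15) (bg3 : g3 ≤ 15) (bg4 : g4 ≤ 15) (bg5 : g5 ≤ 15)
    (hbx : fx + fv2 = 12) (hbeq : b = 18) : False := by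
  have h25 := sum5_ge 3 e1 e2 e3 e4 e5 dE01 dE02 dE03 dE04 dE12 dE13 dE14 dE23 dE24 dE34 (lge g1 e1 b 3 h1 bg1 hbeq)
    (lge g2 e2 b 3 h2 bg2 hbeq) (lge g3 e3 b 3 h3 bg3 hbeq) (lge g4 e4 b 3 h4 bg4 hbeq)
    (lge g5 e5 b 3 h5 bg5 hbeq)
  clear dE01 dE02 dE03 dE04 dE12 dE13 dE14 dE23 dE24 dE34
  omega

-- mini lemmas for b = 17
theorem m17c (z fx : ℕ) (h : z = fx) (hx3 : 3 ≤ fx) (hz : z = 1) : False := by omega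
theorem m17e (g e b z : ℕ) (hg : g + e = b) (hb : b = 17) (h : z = e) (hz : z = 1)
    (bg : g ≤ 15) : False := by omega
theorem m17g (g e b z : ℕ) (hg : g + e = b) (hb : b = 17) (h : z = g) (hz : z = 1)
    (be : e ≤ 15) : False := by omega
theorem m17te (g e b t : ℕ) (hg : g + e = b) (hb : b = 17) (h : 17 - t = e)
    (ht1 : 1 ≤ t) (ht : t ≤ 15) (hne : g ≠ t) : False := by omega
theorem m17tg (g e b t : ℕ) (hg : g + e = b) (hb : b = 17) (h : 17 - t = g)
    (ht1 : 1 ≤ t) (ht : t ≤ 15) (hne : e ≠ t) : False := by omega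
theorem m17f (t z : ℕ) (h : 17 - t = z) (hne : 17 - t ≠ z) : False := absurd h hne

theorem case17one (fx fv2 fu2 fxu fuv e1 e2 e3 e4 e5 g1 g2 g3 g4 g5 b : ℕ)
    (h1 : g1 + e1 = b) (h2 : g2 + e2 = b) (h3 : g3 + e3 = b) (h4 : g4 + e4 = b) (h5 : g5 + e5 = b)
    (bg1 : g1 ≤ 15) (bg2 : g2 ≤ 15) (bg3 : g3 ≤ 15) (bg4 : g4 ≤ 15) (bg5 : g5 ≤ 15)
    (be1 : e1 ≤ 15) (be2 : e2 ≤ 15) (be3 : e3 ≤ 15) (be4 : e4 ≤ 15) (be5 : e5 ≤ 15)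
    (hx3 : 3 ≤ fx) (hv3 : 3 ≤ fv2) (hbeq : b = 17)
    (hz : (1 : ℕ) = fx ∨ (1 : ℕ) = fv2 ∨ (1 : ℕ) = fu2 ∨ (1 : ℕ) = fxu ∨ (1 : ℕ) = fuv ∨ (1 : ℕ) = e1 ∨ (1 : ℕ) = e2 ∨ (1 : ℕ) = e3 ∨ (1 : ℕ) = e4 ∨ (1 : ℕ) = e5 ∨ (1 : ℕ) = g1 ∨ (1 : ℕ) = g2 ∨ (1 : ℕ) = g3 ∨ (1 : ℕ) = g4 ∨ (1 : ℕ) = g5) : 1 = fu2 ∨ 1 = fxu ∨ 1 = fuv := by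
  rcases hz with h|h|h|h|h|h|h|h|h|h|h|h|h|h|h
  exacts [absurd (m17c 1 fx h hx3 rfl) not_false, absurd (m17c 1 fv2 h hv3 rfl) not_false,
    Or.inl h, Or.inr (Or.inl h), Or.inr (Or.inr h),
    absurd (m17e g1 e1 b 1 h1 hbeq h rfl bg1) not_false, absurd (m17e g2 e2 b 1 h2 hbeq h rfl bg2) not_false,
    absurd (m17e g3 e3 b 1 h3 hbeq h rfl bg3) not_false, absurd (m17e g4 e4 b 1 h4 hbeq h rfl bg4) not_false,
    absurd (m17e g5 e5 b 1 h5 hbeq h rfl bg5) not_false,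
    absurd (m17g g1 e1 b 1 h1 hbeq h rfl be1) not_false, absurd (m17g g2 e2 b 1 h2 hbeq h rfl be2) not_false,
    absurd (m17g g3 e3 b 1 h3 hbeq h rfl be3) not_false, absurd (m17g g4 e4 b 1 h4 hbeq h rfl be4) not_false,
    absurd (m17g g5 e5 b 1 h5 hbeq h rfl be5) not_false]
theorem case17t (fx fv2 fu2 fxu fuv e1 e2 e3 e4 e5 g1 g2 g3 g4 g5 b t : ℕ)
    (dG1 : g1 ≠ t) (dG2 : g2 ≠ t) (dG3 : g3 ≠ t) (dG4 : g4 ≠ t) (dG5 : g5 ≠ t)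
    (dEt1 : e1 ≠ t) (dEt2 : e2 ≠ t) (dEt3 : e3 ≠ t) (dEt4 : e4 ≠ t) (dEt5 : e5 ≠ t)
    (h1 : g1 + e1 = b) (h2 : g2 + e2 = b) (h3 : g3 + e3 = b) (h4 : g4 + e4 = b) (h5 : g5 + e5 = b)
    (ht1 : 1 ≤ t) (ht : t ≤ 15)
    (hne1 : 17 - t ≠ fx) (hne2 : 17 - t ≠ fv2) (hbeq : b = 17)
    (hz : (17 - t) = fx ∨ (17 - t) = fv2 ∨ (17 - t) = fu2 ∨ (17 - t) = fxu ∨ (17 - t) = fuv ∨ (17 - t) = e1 ∨ (17 - t) = e2 ∨ (17 - t) = e3 ∨ (17 - t) = e4 ∨ (17 - t) = e5 ∨ (17 - t) = g1 ∨ (17 - t) = g2 ∨ (17 - t) = g3 ∨ (17 - t) = g4 ∨ (17 - t) = g5) : 17 - t = fu2 ∨ 17 - t = fxu ∨ 17 - t = fuv := by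
  rcases hz with h|h|h|h|h|h|h|h|h|h|h|h|h|h|h
  exacts [absurd (m17f t fx h hne1) not_false, absurd (m17f t fv2 h hne2) not_false,
    Or.inl h, Or.inr (Or.inl h), Or.inr (Or.inr h),
    absurd (m17te g1 e1 b t h1 hbeq h ht1 ht dG1) not_false, absurd (m17te g2 e2 b t h2 hbeq h ht1 ht dG2) not_false,
    absurd (m17te g3 e3 b t h3 hbeq h ht1 ht dG3) not_false, absurd (m17te g4 e4 b t h4 hbeq h ht1 ht dG4) not_false,
    absurd (m17te g5 e5 b t h5 hbeq h ht1 ht dG5) not_false,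
    absurd (m17tg g1 e1 b t h1 hbeq h ht1 ht dEt1) not_false, absurd (m17tg g2 e2 b t h2 hbeq h ht1 ht dEt2) not_false,
    absurd (m17tg g3 e3 b t h3 hbeq h ht1 ht dEt3) not_false, absurd (m17tg g4 e4 b t h4 hbeq h ht1 ht dEt4) not_false,
    absurd (m17tg g5 e5 b t h5 hbeq h ht1 ht dEt5) not_false]

theorem case17match (fx fv2 fu2 fxu fuv : ℕ)
    (dT1 : fu2 ≠ fxu) (dT2 : fu2 ≠ fuv) (dT3 : fxu ≠ fuv)
    (hx : 3 ≤ fx) (hx15 : fx ≤ 15) (hv : 3 ≤ fv2) (hv15 : fv2 ≤ 15) (dxv : fx ≠ fv2)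
    (hone : 1 = fu2 ∨ 1 = fxu ∨ 1 = fuv)
    (ht2 : 17 - fx = fu2 ∨ 17 - fx = fxu ∨ 17 - fx = fuv)
    (ht3 : 17 - fv2 = fu2 ∨ 17 - fv2 = fxu ∨ 17 - fv2 = fuv) :
    fuv = 17 - fv2 ∨ fuv = 1 ∨ (fuv = 17 - fx ∧ ((fxu = 1 ∧ fu2 = 17 - fv2) ∨ (fxu = 17 - fv2 ∧ fu2 = 1))) := by
  omega

theorem l17A (fv2 fuv a b : ℕ) (h7 : fv2 + fuv = a) (hm : fuv = 17 - fv2) (hab : a ≠ b)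
    (hb : b = 17) (bv : fv2 ≤ 15) : False := by omega
theorem l17B (fx fv2 fxu fuv e1 e2 e3 e4 e5 a : ℕ) (hm : fuv = 1) (h7 : fv2 + fuv = a)
    (h8 : fx + (e1+e2+e3+e4+e5+fxu) = a) (hE20 : 5*2+10 ≤ e1+e2+e3+e4+e5)
    (bx : 1 ≤ fx) (bxu : 1 ≤ fxu) (bv : fv2 ≤ 15) : False := by omega
theorem l17C (fx fv2 fxu fuv e1 e2 e3 e4 e5 a : ℕ) (hm : fuv = 17 - fx) (h7 : fv2 + fuv = a)
    (h8 : fx + (e1+e2+e3+e4+e5+fxu) = a) (hE20 : 5*2+10 ≤ e1+e2+e3+e4+e5)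
    (bxu : 1 ≤ fxu) (hbx : fx + fv2 = 18) (bv15 : fv2 ≤ 15) : fx = 3 ∨ fx = 4 := by omega
theorem ge4' (e fu2 fxu fv2 : ℕ) (h2 : 2 ≤ e) (hu : e ≠ fu2) (hxu : e ≠ fxu) (hx3 : e ≠ 3)
    (hv : fv2 = 15) (hm2 : (fxu = 1 ∧ fu2 = 17 - fv2) ∨ (fxu = 17 - fv2 ∧ fu2 = 1)) : 4 ≤ e := by
  omega
theorem l17D (fv2 fxu fuv e1 e2 e3 e4 e5 a : ℕ) (h7 : fv2 + fuv = a)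
    (h8 : 3 + (e1+e2+e3+e4+e5+fxu) = a) (hm : fuv = 17 - 3) (hv : fv2 = 15)
    (h30 : 5*4+10 ≤ e1+e2+e3+e4+e5) (bxu : 1 ≤ fxu) : False := by omega
theorem ne34 (e fu2 fxu fv2 : ℕ) (hu : e ≠ fu2) (hxu : e ≠ fxu) (hv : fv2 = 14)
    (hm2 : (fxu = 1 ∧ fu2 = 17 - fv2) ∨ (fxu = 17 - fv2 ∧ fu2 = 1)) : e ≠ 3 := by omega
theorem l17E (fv2 fxu fuv e1 e2 e3 e4 e5 a : ℕ) (h7 : fv2 + fuv = a)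
    (h8 : 4 + (e1+e2+e3+e4+e5+fxu) = a) (hm : fuv = 17 - 4) (hv : fv2 = 14)
    (h28 : 28 ≤ e1+e2+e3+e4+e5) (bxu : 1 ≤ fxu) : False := by omega
theorem lin3 (x : ℕ) (h : 3 + x = 18) : x = 15 := by omega
theorem lin4 (x : ℕ) (h : 4 + x = 18) : x = 14 := by omega

theorem caseB17 (fx fv2 fu2 fxu fuv e1 e2 e3 e4 e5 g1 g2 g3 g4 g5 a b : ℕ) (dE01 : e1 ≠ e2) (dE02 : e1 ≠ e3) (dE03 : e1 ≠ e4) (dE04 : e1 ≠ e5) (dE12 : e2 ≠ e3) (dE13 : e2 ≠ e4) (dE14 : e2 ≠ e5) (dE23 : e3 ≠ e4) (dE24 : e3 ≠ e5) (dE34 : e4 ≠ e5)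
    (dEx1 : e1 ≠ fx) (dEx2 : e2 ≠ fx) (dEx3 : e3 ≠ fx) (dEx4 : e4 ≠ fx) (dEx5 : e5 ≠ fx)
    (dEu1 : e1 ≠ fu2) (dEu2 : e2 ≠ fu2) (dEu3 : e3 ≠ fu2) (dEu4 : e4 ≠ fu2) (dEu5 : e5 ≠ fu2)
    (dExu1 : e1 ≠ fxu) (dExu2 : e2 ≠ fxu) (dExu3 : e3 ≠ fxu) (dExu4 : e4 ≠ fxu) (dExu5 : e5 ≠ fxu)
    (dT1 : fu2 ≠ fxu) (dT2 : fu2 ≠ fuv) (dT3 : fxu ≠ fuv) (dxv : fx ≠ fv2)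
    (h1 : g1 + e1 = b) (h2 : g2 + e2 = b) (h3 : g3 + e3 = b) (h4 : g4 + e4 = b) (h5 : g5 + e5 = b)
    (h7 : fv2 + fuv = a) (h8 : fx + (e1+e2+e3+e4+e5+fxu) = a)
    (bg1 : g1 ≤ 15) (bg2 : g2 ≤ 15) (bg3 : g3 ≤ 15) (bg4 : g4 ≤ 15) (bg5 : g5 ≤ 15)
    (bx15 : fx ≤ 15) (bv15 : fv2 ≤ 15)
    (bxu : 1 ≤ fxu)
    (hbx : fx + fv2 = 18) (hbeq : b = 17) (hab : a ≠ b)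
    (hone : 1 = fu2 ∨ 1 = fxu ∨ 1 = fuv)
    (ht2 : 17 - fx = fu2 ∨ 17 - fx = fxu ∨ 17 - fx = fuv)
    (ht3 : 17 - fv2 = fu2 ∨ 17 - fv2 = fxu ∨ 17 - fv2 = fuv) : False := by
  have hx3 : 3 ≤ fx := by clear dE01 dE02 dE03 dE04 dE12 dE13 dE14 dE23 dE24 dE34 dEx1 dEx2 dEx3 dEx4 dEx5 dEu1 dEu2 dEu3 dEu4 dEu5 dExu1 dExu2 dExu3 dExu4 dExu5 dT1 dT2 dT3 dxv hone ht2 ht3; omega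
  have hv3 : 3 ≤ fv2 := by clear dE01 dE02 dE03 dE04 dE12 dE13 dE14 dE23 dE24 dE34 dEx1 dEx2 dEx3 dEx4 dEx5 dEu1 dEu2 dEu3 dEu4 dEu5 dExu1 dExu2 dExu3 dExu4 dExu5 dT1 dT2 dT3 dxv hone ht2 ht3; omega
  have hE20 := sum5_ge 2 e1 e2 e3 e4 e5 dE01 dE02 dE03 dE04 dE12 dE13 dE14 dE23 dE24 dE34 (lge g1 e1 b 2 h1 bg1 hbeq) (lge g2 e2 b 2 h2 bg2 hbeq) (lge g3 e3 b 2 h3 bg3 hbeq) (lge g4 e4 b 2 h4 bg4 hbeq) (lge g5 e5 b 2 h5 bg5 hbeq)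
  rcases case17match fx fv2 fu2 fxu fuv dT1 dT2 dT3 hx3 bx15 hv3 bv15 dxv hone ht2 ht3 with hm | hm | ⟨hm, hm2⟩
  · exact l17A fv2 fuv a b h7 hm hab hbeq bv15
  · exact l17B fx fv2 fxu fuv e1 e2 e3 e4 e5 a hm h7 h8 hE20 (by clear dE01 dE02 dE03 dE04 dE12 dE13 dE14 dE23 dE24 dE34 dEx1 dEx2 dEx3 dEx4 dEx5 dEu1 dEu2 dEu3 dEu4 dEu5 dExu1 dExu2 dExu3 dExu4 dExu5 dT1 dT2 dT3 dxv hone ht2 ht3; omega) bxu bv15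
  · rcases l17C fx fv2 fxu fuv e1 e2 e3 e4 e5 a hm h7 h8 hE20 bxu hbx bv15 with h34 | h34
    · subst h34
      have hv : fv2 = 15 := lin3 fv2 hbx
      have h30 := sum5_ge 4 e1 e2 e3 e4 e5 dE01 dE02 dE03 dE04 dE12 dE13 dE14 dE23 dE24 dE34 (ge4' e1 fu2 fxu fv2 (lge g1 e1 b 2 h1 bg1 hbeq) dEu1 dExu1 dEx1 hv hm2) (ge4' e2 fu2 fxu fv2 (lge g2 e2 b 2 h2 bg2 hbeq) dEu2 dExu2 dEx2 hv hm2) (ge4' e3 fu2 fxu fv2 (lge g3 e3 b 2 h3 bg3 hbeq) dEu3 dExu3 dEx3 hv hm2) (ge4' e4 fu2 fxu fv2 (lge g4 e4 b 2 h4 bg4 hbeq) dEu4 dExu4 dEx4 hv hm2) (ge4' e5 fu2 fxu fv2 (lge g5 e5 b 2 h5 bg5 hbeq) dEu5 dExu5 dEx5 hv hm2)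
      exact l17D fv2 fxu fuv e1 e2 e3 e4 e5 a h7 h8 hm hv h30 bxu
    · subst h34
      have hv : fv2 = 14 := lin4 fv2 hbx
      have h28 := sum5B e1 e2 e3 e4 e5 dE01 dE02 dE03 dE04 dE12 dE13 dE14 dE23 dE24 dE34 (lge g1 e1 b 2 h1 bg1 hbeq) (lge g2 e2 b 2 h2 bg2 hbeq) (lge g3 e3 b 2 h3 bg3 hbeq) (lge g4 e4 b 2 h4 bg4 hbeq) (lge g5 e5 b 2 h5 bg5 hbeq)
        (ne34 e1 fu2 fxu fv2 dEu1 dExu1 hv hm2) (ne34 e2 fu2 fxu fv2 dEu2 dExu2 hv hm2) (ne34 e3 fu2 fxu fv2 dEu3 dExu3 hv hm2) (ne34 e4 fu2 fxu fv2 dEu4 dExu4 hv hm2) (ne34 e5 fu2 fxu fv2 dEu5 dExu5 hv hm2)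
        dEx1 dEx2 dEx3 dEx4 dEx5
      exact l17E fv2 fxu fuv e1 e2 e3 e4 e5 a h7 h8 hm hv h28 bxu


-- small helpers for key
theorem keysum (fx fv2 fu2 fxu fuv e1 e2 e3 e4 e5 g1 g2 g3 g4 g5 b S : ℕ)
    (h1 : g1 + e1 = b) (h2 : g2 + e2 = b) (h3 : g3 + e3 = b) (h4 : g4 + e4 = b) (h5 : g5 + e5 = b)
    (h6 : fu2 + (fxu + fuv) = b)
    (hsum : fx + (g1 + (g2 + (g3 + (g4 + (g5 + (fu2 + fv2)))))) +
      (e1 + (e2 + (e3 + (e4 + (e5 + (fxu + fuv)))))) = S) (hS : S = 120) :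
    6*b + (fx + fv2) = 120 := by omega
theorem keybr (fx fv2 b : ℕ) (bx1 : 1 ≤ fx) (bx15 : fx ≤ 15) (bv1 : 1 ≤ fv2) (bv15 : fv2 ≤ 15)
    (dxv : fx ≠ fv2) (hb : 6*b + (fx + fv2) = 120) : b = 16 ∨ b = 17 ∨ b = 18 ∨ b = 19 := by omega
theorem keyspl (fx fv2 b c : ℕ) (hb : 6*b + (fx + fv2) = 120) (hc : b = c) :
    fx + fv2 = 120 - 6*c := by omega
theorem keyspl2 (fx fv2 b c : ℕ) (hb : 6*b + (fx + fv2) = 120) (hc : b = c) :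
    fv2 + fx = 120 - 6*c := by omega
theorem lsubA (x : ℕ) (h : x ≤ 15) : 1 ≤ 16 - x := by omega
theorem lsubB (x : ℕ) (h : 1 ≤ x) : 16 - x ≤ 15 := by omega
theorem lsubC (x : ℕ) (h3 : 3 ≤ x) (h15 : x ≤ 15) : 1 ≤ 17 - x ∧ 17 - x ≤ 15 := by omega
theorem lnex (x : ℕ) (h3 : 3 ≤ x) : 17 - x ≠ x := by omega
theorem lnexv (x y : ℕ) (h : x + y = 18) (hy : 1 ≤ y) : 17 - x ≠ y := by omega
theorem lbnd9 (x y : ℕ) (h : x + y = 120 - 6*16) (hy : y ≤ 15) : 9 ≤ x := by omega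
theorem lbnd3 (x y : ℕ) (h : x + y = 120 - 6*17) (hy : y ≤ 15) : 3 ≤ x := by omega
theorem twoval (p q r α β : ℕ) (hp : p = α ∨ p = β) (hq : q = α ∨ q = β) (hr : r = α ∨ r = β)
    (hpr : p ≠ r) (hqr : q ≠ r) : p = q := by omega

theorem key (fx fv2 fu2 fxu fuv e1 e2 e3 e4 e5 g1 g2 g3 g4 g5 a b : ℕ)
    (Bfx : 1 ≤ fx ∧ fx ≤ 15)
    (Bfv2 : 1 ≤ fv2 ∧ fv2 ≤ 15)
    (Bfu2 : 1 ≤ fu2 ∧ fu2 ≤ 15)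
    (Bfxu : 1 ≤ fxu ∧ fxu ≤ 15)
    (Bfuv : 1 ≤ fuv ∧ fuv ≤ 15)
    (Be1 : 1 ≤ e1 ∧ e1 ≤ 15)
    (Be2 : 1 ≤ e2 ∧ e2 ≤ 15)
    (Be3 : 1 ≤ e3 ∧ e3 ≤ 15)
    (Be4 : 1 ≤ e4 ∧ e4 ≤ 15)
    (Be5 : 1 ≤ e5 ∧ e5 ≤ 15)
    (Bg1 : 1 ≤ g1 ∧ g1 ≤ 15)
    (Bg2 : 1 ≤ g2 ∧ g2 ≤ 15)
    (Bg3 : 1 ≤ g3 ∧ g3 ≤ 15)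
    (Bg4 : 1 ≤ g4 ∧ g4 ≤ 15)
    (Bg5 : 1 ≤ g5 ∧ g5 ≤ 15)
    (dE01 : e1 ≠ e2) (dE02 : e1 ≠ e3) (dE03 : e1 ≠ e4) (dE04 : e1 ≠ e5) (dE12 : e2 ≠ e3) (dE13 : e2 ≠ e4) (dE14 : e2 ≠ e5) (dE23 : e3 ≠ e4) (dE24 : e3 ≠ e5) (dE34 : e4 ≠ e5)
    (dEx1 : e1 ≠ fx) (dEx2 : e2 ≠ fx) (dEx3 : e3 ≠ fx) (dEx4 : e4 ≠ fx) (dEx5 : e5 ≠ fx)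
    (dEv1 : e1 ≠ fv2) (dEv2 : e2 ≠ fv2) (dEv3 : e3 ≠ fv2) (dEv4 : e4 ≠ fv2) (dEv5 : e5 ≠ fv2)
    (dEu1 : e1 ≠ fu2) (dEu2 : e2 ≠ fu2) (dEu3 : e3 ≠ fu2) (dEu4 : e4 ≠ fu2) (dEu5 : e5 ≠ fu2)
    (dExu1 : e1 ≠ fxu) (dExu2 : e2 ≠ fxu) (dExu3 : e3 ≠ fxu) (dExu4 : e4 ≠ fxu) (dExu5 : e5 ≠ fxu)
    (dEuv1 : e1 ≠ fuv) (dEuv2 : e2 ≠ fuv) (dEuv3 : e3 ≠ fuv) (dEuv4 : e4 ≠ fuv) (dEuv5 : e5 ≠ fuv)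
    (dGx1 : g1 ≠ fx) (dGx2 : g2 ≠ fx) (dGx3 : g3 ≠ fx) (dGx4 : g4 ≠ fx) (dGx5 : g5 ≠ fx)
    (dGv1 : g1 ≠ fv2) (dGv2 : g2 ≠ fv2) (dGv3 : g3 ≠ fv2) (dGv4 : g4 ≠ fv2) (dGv5 : g5 ≠ fv2)
    (dGuv1 : g1 ≠ fuv) (dGuv2 : g2 ≠ fuv) (dGuv3 : g3 ≠ fuv) (dGuv4 : g4 ≠ fuv) (dGuv5 : g5 ≠ fuv)
    (dT1 : fu2 ≠ fxu) (dT2 : fu2 ≠ fuv) (dT3 : fxu ≠ fuv) (dxv : fx ≠ fv2)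
    (h1 : g1 + e1 = b) (h2 : g2 + e2 = b) (h3 : g3 + e3 = b) (h4 : g4 + e4 = b) (h5 : g5 + e5 = b)
    (h6 : fu2 + (fxu + fuv) = b)
    (h7 : fv2 + fuv = a) (h8 : fx + (e1+e2+e3+e4+e5+fxu) = a)
    (hsum : fx + (g1 + (g2 + (g3 + (g4 + (g5 + (fu2 + fv2)))))) +
      (e1 + (e2 + (e3 + (e4 + (e5 + (fxu + fuv)))))) = 120)
    (hab : a ≠ b)
    (hsurj : ∀ k, 1 ≤ k → k ≤ 15 → k = fx ∨ k = fv2 ∨ k = fu2 ∨ k = fxu ∨ k = fuv ∨ k = e1 ∨ k = e2 ∨ k = e3 ∨ k = e4 ∨ k = e5 ∨ k = g1 ∨ k = g2 ∨ k = g3 ∨ k = g4 ∨ k = g5) : False := by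
  have hb : 6*b + (fx + fv2) = 120 :=
    keysum fx fv2 fu2 fxu fuv e1 e2 e3 e4 e5 g1 g2 g3 g4 g5 b 120 h1 h2 h3 h4 h5 h6 hsum rfl
  rcases keybr fx fv2 b Bfx.1 Bfx.2 Bfv2.1 Bfv2.2 dxv hb with hc | hc | hc | hc
  · -- b = 16
    have hsp := keyspl fx fv2 b 16 hb hc
    have hfuv := case16fuv fx fv2 fu2 fxu fuv e1 e2 e3 e4 e5 g1 g2 g3 g4 g5 b
      dEuv1 dEuv2 dEuv3 dEuv4 dEuv5 dGuv1 dGuv2 dGuv3 dGuv4 dGuv5 h1 h2 h3 h4 h5 h6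
      Bfuv.1 Bfuv.2 Bfu2.1 Bfxu.1 (lbnd9 fx fv2 hsp Bfv2.2)
      (lbnd9 fv2 fx (keyspl2 fx fv2 b 16 hb hc) Bfx.2) hc
      (hsurj (16 - fuv) (lsubA fuv Bfuv.2) (lsubB fuv Bfuv.1))
    exact caseB16 fx fv2 fxu fuv e1 e2 e3 e4 e5 a dE01 dE02 dE03 dE04 dE12 dE13 dE14 dE23 dE24 dE34
      h7 h8 Be1.1 Be2.1 Be3.1 Be4.1 Be5.1 Bfxu.1 Bfv2.2 hsp hfuv
  · -- b = 17
    have hsp : fx + fv2 = 18 := keyspl fx fv2 b 17 hb hc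
    have hx3 : 3 ≤ fx := lbnd3 fx fv2 (keyspl fx fv2 b 17 hb hc) Bfv2.2
    have hv3 : 3 ≤ fv2 := lbnd3 fv2 fx (keyspl2 fx fv2 b 17 hb hc) Bfx.2
    have hone := case17one fx fv2 fu2 fxu fuv e1 e2 e3 e4 e5 g1 g2 g3 g4 g5 b
      h1 h2 h3 h4 h5 Bg1.2 Bg2.2 Bg3.2 Bg4.2 Bg5.2 Be1.2 Be2.2 Be3.2 Be4.2 Be5.2
      hx3 hv3 hc (hsurj 1 (Nat.le_refl 1) (by decide))
    have ht2 := case17t fx fv2 fu2 fxu fuv e1 e2 e3 e4 e5 g1 g2 g3 g4 g5 b fx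
      dGx1 dGx2 dGx3 dGx4 dGx5 dEx1 dEx2 dEx3 dEx4 dEx5 h1 h2 h3 h4 h5 Bfx.1 Bfx.2
      (lnex fx hx3) (lnexv fx fv2 hsp Bfv2.1) hc
      (hsurj (17 - fx) (lsubC fx hx3 Bfx.2).1 (lsubC fx hx3 Bfx.2).2)
    have ht3 := case17t fx fv2 fu2 fxu fuv e1 e2 e3 e4 e5 g1 g2 g3 g4 g5 b fv2
      dGv1 dGv2 dGv3 dGv4 dGv5 dEv1 dEv2 dEv3 dEv4 dEv5 h1 h2 h3 h4 h5 Bfv2.1 Bfv2.2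
      (lnexv fv2 fx (keyspl2 fx fv2 b 17 hb hc) Bfx.1) (lnex fv2 hv3) hc
      (hsurj (17 - fv2) (lsubC fv2 hv3 Bfv2.2).1 (lsubC fv2 hv3 Bfv2.2).2)
    -- ht2/ht3 give membership of 17 - fx, 17 - fv2 but with fx/fv2 roles: note for ht3 the exclusions are ≠ fx
    exact caseB17 fx fv2 fu2 fxu fuv e1 e2 e3 e4 e5 g1 g2 g3 g4 g5 a b dE01 dE02 dE03 dE04 dE12 dE13 dE14 dE23 dE24 dE34
      dEx1 dEx2 dEx3 dEx4 dEx5 dEu1 dEu2 dEu3 dEu4 dEu5 dExu1 dExu2 dExu3 dExu4 dExu5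
      dT1 dT2 dT3 dxv h1 h2 h3 h4 h5 h7 h8 Bg1.2 Bg2.2 Bg3.2 Bg4.2 Bg5.2
      Bfx.2 Bfv2.2 Bfxu.1 hsp hc hab hone ht2 ht3
  · -- b = 18
    exact caseB18 fx fv2 fxu fuv e1 e2 e3 e4 e5 g1 g2 g3 g4 g5 a b dE01 dE02 dE03 dE04 dE12 dE13 dE14 dE23 dE24 dE34
      h1 h2 h3 h4 h5 h7 h8 Bfx.1 Bfxu.1 Bfv2.2 Bfuv.2
      Bg1.2 Bg2.2 Bg3.2 Bg4.2 Bg5.2 (keyspl fx fv2 b 18 hb hc) hc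
  · -- b = 19
    exact caseB19 fx fv2 fxu fuv e1 e2 e3 e4 e5 g1 g2 g3 g4 g5 a b dE01 dE02 dE03 dE04 dE12 dE13 dE14 dE23 dE24 dE34
      h1 h2 h3 h4 h5 h7 h8 Bfx.1 Bfxu.1 Bfv2.2 Bfuv.2
      Bg1.2 Bg2.2 Bg3.2 Bg4.2 Bg5.2 (keyspl fx fv2 b 19 hb hc) hc
end SpiderAux
set_option synthInstance.maxSize 2000
namespace SpiderGlue
open SpiderAux
abbrev V8 := Option (Fin 5 ⊕ Fin 1 × Bool)
def vx : V8 := none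
def vy (i : Fin 5) : V8 := some (Sum.inl i)
def vu : V8 := some (Sum.inr (0, false))
def vv : V8 := some (Sum.inr (0, true))

theorem hwx (f : V8 → ℕ) (g : Sym2 V8 → ℕ) :
    latWeight (spider12 5 1) f g vx = f vx + (g s(vx, vy 0) + g s(vx, vy 1) + g s(vx, vy 2) + g s(vx, vy 3) + g s(vx, vy 4) + g s(vx, vu)) := by
  rw [latWeight, show (spider12 5 1).neighborFinset vx = {vy 0, vy 1, vy 2, vy 3, vy 4, vu} from by decide]
  simp +decide [Finset.sum_insert, Finset.mem_insert]
  ring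
theorem hwy (f : V8 → ℕ) (g : Sym2 V8 → ℕ) (i : Fin 5) :
    latWeight (spider12 5 1) f g (vy i) = f (vy i) + g s(vx, vy i) := by
  rw [latWeight, show (spider12 5 1).neighborFinset (vy i) = {vx} from by fin_cases i <;> decide]
  rw [Finset.sum_singleton, Sym2.eq_swap]
theorem hwu (f : V8 → ℕ) (g : Sym2 V8 → ℕ) :
    latWeight (spider12 5 1) f g vu = f vu + (g s(vx, vu) + g s(vu, vv)) := by
  rw [latWeight, show (spider12 5 1).neighborFinset vu = {vx, vv} from by decide]
  rw [Finset.sum_insert (by decide), Finset.sum_singleton, Sym2.eq_swap]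
theorem hwv (f : V8 → ℕ) (g : Sym2 V8 → ℕ) :
    latWeight (spider12 5 1) f g vv = f vv + g s(vu, vv) := by
  rw [latWeight, show (spider12 5 1).neighborFinset vv = {vu} from by decide]
  rw [Finset.sum_singleton, Sym2.eq_swap]

theorem part1 : ∀ fv fe, IsLocalAntimagicTotal (spider12 5 1) fv fe →
    (Finset.univ.image (latWeight (spider12 5 1) fv fe)).card ≠ 2 := by
  intro f g H hcard
  obtain ⟨Hbij, hadj⟩ := H
  obtain ⟨hmap, hinj, hsurj⟩ := (Hbij : Set.BijOn (Sum.elim f (fun e : (spider12 5 1).edgeSet => g (e : Sym2 V8))) Set.univ (Set.Icc 1 15))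
  have hinj' : ∀ p q : V8 ⊕ (spider12 5 1).edgeSet, (Sum.elim f (fun e : (spider12 5 1).edgeSet => g (e : Sym2 V8))) p = (Sum.elim f (fun e : (spider12 5 1).edgeSet => g (e : Sym2 V8))) q → p = q :=
    fun p q h => hinj (Set.mem_univ p) (Set.mem_univ q) h
  have hbd : ∀ p : V8 ⊕ (spider12 5 1).edgeSet, 1 ≤ (Sum.elim f (fun e : (spider12 5 1).edgeSet => g (e : Sym2 V8))) p ∧ (Sum.elim f (fun e : (spider12 5 1).edgeSet => g (e : Sym2 V8))) p ≤ 15 := fun p => hmap (Set.mem_univ p)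
  have hm0 : s(vx, vy 0) ∈ (spider12 5 1).edgeSet := by decide
  have hm1 : s(vx, vy 1) ∈ (spider12 5 1).edgeSet := by decide
  have hm2 : s(vx, vy 2) ∈ (spider12 5 1).edgeSet := by decide
  have hm3 : s(vx, vy 3) ∈ (spider12 5 1).edgeSet := by decide
  have hm4 : s(vx, vy 4) ∈ (spider12 5 1).edgeSet := by decide
  have hmxu : s(vx, vu) ∈ (spider12 5 1).edgeSet := by decide
  have hmuv : s(vu, vv) ∈ (spider12 5 1).edgeSet := by decide
  have hneVV : ∀ w w' : V8, w ≠ w' → f w ≠ f w' :=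
    fun w w' hne h => hne (Sum.inl.inj (hinj' (Sum.inl w) (Sum.inl w') h))
  have hneVE : ∀ (w : V8) (e : Sym2 V8) (he : e ∈ (spider12 5 1).edgeSet), f w ≠ g e :=
    fun w e he h => Sum.inl_ne_inr (hinj' (Sum.inl w) (Sum.inr ⟨e, he⟩) h)
  have hneEE : ∀ (e e' : Sym2 V8) (he : e ∈ (spider12 5 1).edgeSet) (he' : e' ∈ (spider12 5 1).edgeSet), e ≠ e' → g e ≠ g e' :=
    fun e e' he he' hne h => hne (congrArg Subtype.val (Sum.inr.inj (hinj' (Sum.inr ⟨e, he⟩) (Sum.inr ⟨e', he'⟩) h)))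
  have hsurj15 : ∀ k, 1 ≤ k → k ≤ 15 → k = f vx ∨ k = f vv ∨ k = f vu ∨ k = g s(vx, vu) ∨ k = g s(vu, vv) ∨ k = g s(vx, vy 0) ∨ k = g s(vx, vy 1) ∨ k = g s(vx, vy 2) ∨ k = g s(vx, vy 3) ∨ k = g s(vx, vy 4) ∨ k = f (vy 0) ∨ k = f (vy 1) ∨ k = f (vy 2) ∨ k = f (vy 3) ∨ k = f (vy 4) := by
    intro k h1 h15
    obtain ⟨p, -, hp⟩ := hsurj (show k ∈ Set.Icc 1 15 from ⟨h1, h15⟩)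
    rcases p with w | ⟨e, he⟩
    · rcases (show ∀ w : V8, w = vx ∨ w = vy 0 ∨ w = vy 1 ∨ w = vy 2 ∨ w = vy 3 ∨ w = vy 4 ∨ w = vu ∨ w = vv from by decide) w with rfl|rfl|rfl|rfl|rfl|rfl|rfl|rfl
      · exact Or.inl (hp.symm)
      · exact Or.inr (Or.inr (Or.inr (Or.inr (Or.inr (Or.inr (Or.inr (Or.inr (Or.inr (Or.inr (Or.inl (hp.symm)))))))))))
      · exact Or.inr (Or.inr (Or.inr (Or.inr (Or.inr (Or.inr (Or.inr (Or.inr (Or.inr (Or.inr (Or.inr (Or.inl (hp.symm))))))))))))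
      · exact Or.inr (Or.inr (Or.inr (Or.inr (Or.inr (Or.inr (Or.inr (Or.inr (Or.inr (Or.inr (Or.inr (Or.inr (Or.inl (hp.symm)))))))))))))
      · exact Or.inr (Or.inr (Or.inr (Or.inr (Or.inr (Or.inr (Or.inr (Or.inr (Or.inr (Or.inr (Or.inr (Or.inr (Or.inr (Or.inl (hp.symm))))))))))))))
      · exact Or.inr (Or.inr (Or.inr (Or.inr (Or.inr (Or.inr (Or.inr (Or.inr (Or.inr (Or.inr (Or.inr (Or.inr (Or.inr (Or.inr (hp.symm))))))))))))))
      · exact Or.inr (Or.inr (Or.inl (hp.symm)))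
      · exact Or.inr (Or.inl (hp.symm))
    · rcases (show ∀ e ∈ (spider12 5 1).edgeFinset, e = s(vx, vy 0) ∨ e = s(vx, vy 1) ∨ e = s(vx, vy 2) ∨ e = s(vx, vy 3) ∨ e = s(vx, vy 4) ∨ e = s(vx, vu) ∨ e = s(vu, vv) from by decide) e ((SimpleGraph.mem_edgeFinset).mpr he) with rfl|rfl|rfl|rfl|rfl|rfl|rfl
      · exact Or.inr (Or.inr (Or.inr (Or.inr (Or.inr (Or.inl (hp.symm))))))
      · exact Or.inr (Or.inr (Or.inr (Or.inr (Or.inr (Or.inr (Or.inl (hp.symm)))))))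
      · exact Or.inr (Or.inr (Or.inr (Or.inr (Or.inr (Or.inr (Or.inr (Or.inl (hp.symm))))))))
      · exact Or.inr (Or.inr (Or.inr (Or.inr (Or.inr (Or.inr (Or.inr (Or.inr (Or.inl (hp.symm)))))))))
      · exact Or.inr (Or.inr (Or.inr (Or.inr (Or.inr (Or.inr (Or.inr (Or.inr (Or.inr (Or.inl (hp.symm))))))))))
      · exact Or.inr (Or.inr (Or.inr (Or.inl (hp.symm))))
      · exact Or.inr (Or.inr (Or.inr (Or.inr (Or.inl (hp.symm)))))
  obtain ⟨α, β, hab0, himg⟩ := Finset.card_eq_two.mp hcard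
  have hval : ∀ z : V8, latWeight (spider12 5 1) f g z = α ∨ latWeight (spider12 5 1) f g z = β := by
    intro z
    have hz : latWeight (spider12 5 1) f g z ∈ Finset.univ.image (latWeight (spider12 5 1) f g) :=
      Finset.mem_image_of_mem _ (Finset.mem_univ z)
    rw [himg] at hz; simpa using hz
  have adjxy : ∀ i : Fin 5, (spider12 5 1).Adj vx (vy i) := by decide
  have adjxu : (spider12 5 1).Adj vx vu := by decide
  have adjuv : (spider12 5 1).Adj vu vv := by decide
  have hYU : ∀ i : Fin 5, latWeight (spider12 5 1) f g (vy i) = latWeight (spider12 5 1) f g vu := fun i =>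
    twoval _ _ _ α β (hval (vy i)) (hval vu) (hval vx) (Ne.symm (hadj (adjxy i))) (Ne.symm (hadj adjxu))
  have hVX : latWeight (spider12 5 1) f g vv = latWeight (spider12 5 1) f g vx :=
    twoval _ _ _ α β (hval vv) (hval vx) (hval vu) (Ne.symm (hadj adjuv)) (hadj adjxu)
  have heq1 : f (vy 0) + g s(vx, vy 0) = latWeight (spider12 5 1) f g vu := by rw [← hwy f g 0]; exact hYU 0
  have heq2 : f (vy 1) + g s(vx, vy 1) = latWeight (spider12 5 1) f g vu := by rw [← hwy f g 1]; exact hYU 1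
  have heq3 : f (vy 2) + g s(vx, vy 2) = latWeight (spider12 5 1) f g vu := by rw [← hwy f g 2]; exact hYU 2
  have heq4 : f (vy 3) + g s(vx, vy 3) = latWeight (spider12 5 1) f g vu := by rw [← hwy f g 3]; exact hYU 3
  have heq5 : f (vy 4) + g s(vx, vy 4) = latWeight (spider12 5 1) f g vu := by rw [← hwy f g 4]; exact hYU 4
  have heq6 : f vu + (g s(vx, vu) + g s(vu, vv)) = latWeight (spider12 5 1) f g vu := (hwu f g).symm
  have heq7 : f vv + g s(vu, vv) = latWeight (spider12 5 1) f g vx := by rw [← hwv f g]; exact hVX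
  have heq8 : f vx + (g s(vx, vy 0) + g s(vx, vy 1) + g s(vx, vy 2) + g s(vx, vy 3) + g s(vx, vy 4) + g s(vx, vu)) = latWeight (spider12 5 1) f g vx := (hwx f g).symm
  have habw : latWeight (spider12 5 1) f g vx ≠ latWeight (spider12 5 1) f g vu := hadj adjxu
  have himgF : Finset.univ.image (Sum.elim f (fun e : (spider12 5 1).edgeSet => g (e : Sym2 V8))) = Finset.Icc 1 15 := by
    apply Finset.Subset.antisymm
    · intro k hk
      obtain ⟨p, -, rfl⟩ := Finset.mem_image.mp hk
      exact Finset.mem_Icc.mpr (hbd p)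
    · intro k hk
      obtain ⟨p, -, hp⟩ := hsurj (show k ∈ Set.Icc 1 15 from Finset.mem_Icc.mp hk)
      exact Finset.mem_image.mpr ⟨p, Finset.mem_univ p, hp⟩
  have hsum0 : ∑ p : V8 ⊕ (spider12 5 1).edgeSet, (Sum.elim f (fun e : (spider12 5 1).edgeSet => g (e : Sym2 V8))) p = 120 := by
    have hsi := Finset.sum_image (f := (id : ℕ → ℕ)) (s := Finset.univ) (fun x _ y _ h => hinj' x y h)
    rw [himgF] at hsi
    simp only [id] at hsi
    rw [← hsi]; decide
  rw [Fintype.sum_sum_type] at hsum0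
  simp only [Sum.elim_inl, Sum.elim_inr] at hsum0
  rw [show (Finset.univ : Finset V8) = {vx, vy 0, vy 1, vy 2, vy 3, vy 4, vu, vv} from by decide] at hsum0
  rw [← Finset.sum_subtype (spider12 5 1).edgeFinset (fun x => SimpleGraph.mem_edgeFinset) g] at hsum0
  rw [show (spider12 5 1).edgeFinset = {s(vx, vy 0), s(vx, vy 1), s(vx, vy 2), s(vx, vy 3), s(vx, vy 4), s(vx, vu), s(vu, vv)} from by decide] at hsum0
  repeat rw [Finset.sum_insert (by decide)] at hsum0
  rw [Finset.sum_singleton, Finset.sum_singleton] at hsum0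
  refine key (f vx) (f vv) (f vu) (g s(vx, vu)) (g s(vu, vv)) (g s(vx, vy 0)) (g s(vx, vy 1)) (g s(vx, vy 2)) (g s(vx, vy 3)) (g s(vx, vy 4)) (f (vy 0)) (f (vy 1)) (f (vy 2)) (f (vy 3)) (f (vy 4)) (latWeight (spider12 5 1) f g vx) (latWeight (spider12 5 1) f g vu) ?_ ?_ ?_ ?_ ?_ ?_ ?_ ?_ ?_ ?_ ?_ ?_ ?_ ?_ ?_
    ?_ ?_ ?_ ?_ ?_ ?_ ?_ ?_ ?_ ?_   -- dE
    ?_ ?_ ?_ ?_ ?_ ?_ ?_ ?_ ?_ ?_ ?_ ?_ ?_ ?_ ?_ ?_ ?_ ?_ ?_ ?_ ?_ ?_ ?_ ?_ ?_   -- dEx dEv dEu dExu dEuv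
    ?_ ?_ ?_ ?_ ?_ ?_ ?_ ?_ ?_ ?_ ?_ ?_ ?_ ?_ ?_   -- dGx dGv dGuv
    ?_ ?_ ?_ ?_ heq1 heq2 heq3 heq4 heq5 heq6 heq7 heq8 ?_ habw hsurj15
  · exact hbd (Sum.inl vx)
  · exact hbd (Sum.inl vv)
  · exact hbd (Sum.inl vu)
  · exact hbd (Sum.inr ⟨s(vx, vu), hmxu⟩)
  · exact hbd (Sum.inr ⟨s(vu, vv), hmuv⟩)
  · exact hbd (Sum.inr ⟨s(vx, vy 0), hm0⟩)
  · exact hbd (Sum.inr ⟨s(vx, vy 1), hm1⟩)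
  · exact hbd (Sum.inr ⟨s(vx, vy 2), hm2⟩)
  · exact hbd (Sum.inr ⟨s(vx, vy 3), hm3⟩)
  · exact hbd (Sum.inr ⟨s(vx, vy 4), hm4⟩)
  · exact hbd (Sum.inl (vy 0))
  · exact hbd (Sum.inl (vy 1))
  · exact hbd (Sum.inl (vy 2))
  · exact hbd (Sum.inl (vy 3))
  · exact hbd (Sum.inl (vy 4))
  · exact hneEE s(vx, vy 0) s(vx, vy 1) hm0 hm1 (by decide)
  · exact hneEE s(vx, vy 0) s(vx, vy 2) hm0 hm2 (by decide)
  · exact hneEE s(vx, vy 0) s(vx, vy 3) hm0 hm3 (by decide)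
  · exact hneEE s(vx, vy 0) s(vx, vy 4) hm0 hm4 (by decide)
  · exact hneEE s(vx, vy 1) s(vx, vy 2) hm1 hm2 (by decide)
  · exact hneEE s(vx, vy 1) s(vx, vy 3) hm1 hm3 (by decide)
  · exact hneEE s(vx, vy 1) s(vx, vy 4) hm1 hm4 (by decide)
  · exact hneEE s(vx, vy 2) s(vx, vy 3) hm2 hm3 (by decide)
  · exact hneEE s(vx, vy 2) s(vx, vy 4) hm2 hm4 (by decide)
  · exact hneEE s(vx, vy 3) s(vx, vy 4) hm3 hm4 (by decide)
  · exact Ne.symm (hneVE vx s(vx, vy 0) hm0)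
  · exact Ne.symm (hneVE vx s(vx, vy 1) hm1)
  · exact Ne.symm (hneVE vx s(vx, vy 2) hm2)
  · exact Ne.symm (hneVE vx s(vx, vy 3) hm3)
  · exact Ne.symm (hneVE vx s(vx, vy 4) hm4)
  · exact Ne.symm (hneVE vv s(vx, vy 0) hm0)
  · exact Ne.symm (hneVE vv s(vx, vy 1) hm1)
  · exact Ne.symm (hneVE vv s(vx, vy 2) hm2)
  · exact Ne.symm (hneVE vv s(vx, vy 3) hm3)
  · exact Ne.symm (hneVE vv s(vx, vy 4) hm4)
  · exact Ne.symm (hneVE vu s(vx, vy 0) hm0)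
  · exact Ne.symm (hneVE vu s(vx, vy 1) hm1)
  · exact Ne.symm (hneVE vu s(vx, vy 2) hm2)
  · exact Ne.symm (hneVE vu s(vx, vy 3) hm3)
  · exact Ne.symm (hneVE vu s(vx, vy 4) hm4)
  · exact hneEE s(vx, vy 0) s(vx, vu) hm0 hmxu (by decide)
  · exact hneEE s(vx, vy 1) s(vx, vu) hm1 hmxu (by decide)
  · exact hneEE s(vx, vy 2) s(vx, vu) hm2 hmxu (by decide)
  · exact hneEE s(vx, vy 3) s(vx, vu) hm3 hmxu (by decide)
  · exact hneEE s(vx, vy 4) s(vx, vu) hm4 hmxu (by decide)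
  · exact hneEE s(vx, vy 0) s(vu, vv) hm0 hmuv (by decide)
  · exact hneEE s(vx, vy 1) s(vu, vv) hm1 hmuv (by decide)
  · exact hneEE s(vx, vy 2) s(vu, vv) hm2 hmuv (by decide)
  · exact hneEE s(vx, vy 3) s(vu, vv) hm3 hmuv (by decide)
  · exact hneEE s(vx, vy 4) s(vu, vv) hm4 hmuv (by decide)
  · exact hneVV (vy 0) vx (by decide)
  · exact hneVV (vy 1) vx (by decide)
  · exact hneVV (vy 2) vx (by decide)
  · exact hneVV (vy 3) vx (by decide)
  · exact hneVV (vy 4) vx (by decide)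
  · exact hneVV (vy 0) vv (by decide)
  · exact hneVV (vy 1) vv (by decide)
  · exact hneVV (vy 2) vv (by decide)
  · exact hneVV (vy 3) vv (by decide)
  · exact hneVV (vy 4) vv (by decide)
  · exact hneVE (vy 0) s(vu, vv) hmuv
  · exact hneVE (vy 1) s(vu, vv) hmuv
  · exact hneVE (vy 2) s(vu, vv) hmuv
  · exact hneVE (vy 3) s(vu, vv) hmuv
  · exact hneVE (vy 4) s(vu, vv) hmuv
  · exact hneVE vu s(vx, vu) hmxu
  · exact hneVE vu s(vu, vv) hmuv
  · exact hneEE s(vx, vu) s(vu, vv) hmxu hmuv (by decide)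
  · exact hneVV vx vv (by decide)
  · exact hsum0
end SpiderGlue

namespace SpiderGlue

def fv0 : V8 → ℕ
  | none => 10
  | some (Sum.inl i) => [11,12,15,14,9].getD i.val 0
  | some (Sum.inr (_, false)) => 8
  | some (Sum.inr (_, true)) => 13

def fe0 (e : Sym2 V8) : ℕ :=
  if e = s(vx, vy 0) then 5 else if e = s(vx, vy 1) then 4
  else if e = s(vx, vy 2) then 1 else if e = s(vx, vy 3) then 2
  else if e = s(vx, vy 4) then 7 else if e = s(vx, vu) then 6
  else if e = s(vu, vv) then 3 else 0

theorem total0 : IsTotalLabeling (spider12 5 1) fv0 fe0 := by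
  rw [IsTotalLabeling, show Fintype.card V8 + (spider12 5 1).edgeFinset.card = 15 from by decide]
  refine ⟨?_, ?_, ?_⟩
  · intro p _
    simp only [Set.mem_Icc]
    revert p; decide
  · intro p _ q _ h
    have : ∀ p q : V8 ⊕ (spider12 5 1).edgeSet,
        Sum.elim fv0 (fun e : (spider12 5 1).edgeSet => fe0 (e : Sym2 V8)) p =
        Sum.elim fv0 (fun e : (spider12 5 1).edgeSet => fe0 (e : Sym2 V8)) q → p = q :=
      of_decide_eq_true (inst := @Fintype.decidableForallFintype _ _
        (fun _ => Fintype.decidableForallFintype) _) rfl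
    exact this p q h
  · intro k hk
    simp only [Set.mem_Icc] at hk
    have : ∀ k ∈ Finset.Icc 1 15, ∃ p : V8 ⊕ (spider12 5 1).edgeSet,
        Sum.elim fv0 (fun e : (spider12 5 1).edgeSet => fe0 (e : Sym2 V8)) p = k :=
      of_decide_eq_true (inst := Finset.decidableDforallFinset
        (_hp := fun _ _ => Fintype.decidableExistsFintype)) rfl
    obtain ⟨p, hp⟩ := this k (Finset.mem_Icc.mpr hk)
    exact ⟨p, Set.mem_univ _, hp⟩

theorem anti0 : ∀ ⦃a b : V8⦄, (spider12 5 1).Adj a b →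
    latWeight (spider12 5 1) fv0 fe0 a ≠ latWeight (spider12 5 1) fv0 fe0 b := by decide

theorem card0 : (Finset.univ.image (latWeight (spider12 5 1) fv0 fe0)).card = 3 := by decide

end SpiderGlue

/-- The spider `Sp(1^[5], 2^[1])` admits no local antimagic total labeling with exactly
`2` distinct vertex weights; hence its local antimagic total chromatic number is `3`. -/
theorem chiLat_spider12_five_one :
    (∀ fv fe, IsLocalAntimagicTotal (spider12 5 1) fv fe →
      (Finset.univ.image (latWeight (spider12 5 1) fv fe)).card ≠ 2) ∧
    chiLat (spider12 5 1) = 3 := by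
  refine ⟨SpiderGlue.part1, ?_⟩
  have h3 : 3 ∈ {c | ∃ fv fe, IsLocalAntimagicTotal (spider12 5 1) fv fe ∧
      (Finset.univ.image (latWeight (spider12 5 1) fv fe)).card = c} :=
    ⟨SpiderGlue.fv0, SpiderGlue.fe0, ⟨SpiderGlue.total0, SpiderGlue.anti0⟩, SpiderGlue.card0⟩
  rw [chiLat]
  refine le_antisymm (Nat.sInf_le h3) (le_csInf ⟨3, h3⟩ ?_)
  rintro c ⟨f, g, H, rfl⟩
  rcases Nat.lt_or_ge (Finset.univ.image (latWeight (spider12 5 1) f g)).card 3 with hlt | hge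
  · exfalso
    have h0 : (Finset.univ.image (latWeight (spider12 5 1) f g)).Nonempty :=
      Finset.image_nonempty.mpr Finset.univ_nonempty
    have hpos := Finset.card_pos.mpr h0
    have hne2 := SpiderGlue.part1 f g H
    have hc : (Finset.univ.image (latWeight (spider12 5 1) f g)).card = 1 ∨
        (Finset.univ.image (latWeight (spider12 5 1) f g)).card = 2 := by omega
    rcases hc with hc | hc
    · obtain ⟨z, hz⟩ := Finset.card_eq_one.mp hc
      have h1 := Finset.mem_image_of_mem (latWeight (spider12 5 1) f g) (Finset.mem_univ SpiderGlue.vx)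
      have h2 := Finset.mem_image_of_mem (latWeight (spider12 5 1) f g) (Finset.mem_univ SpiderGlue.vu)
      rw [hz, Finset.mem_singleton] at h1 h2
      exact H.2 (show (spider12 5 1).Adj SpiderGlue.vx SpiderGlue.vu from by decide) (h1.trans h2.symm)
    · exact hne2 hc
  · exact hge
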